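/- Let (B_1,B_2,a,b) be a handsaw quiver datum. Then the moment map equation μ = 0 holds if and only if B_{1,i} ∘ (α_i|_z) = (α_{i+1}|_z) ∘ β_i for every 1 ≤ i ≤ n−2 and every z ∈ ℂ. -/

import Mathlib

noncomputable section

open LinearMap Module

/-- The chain `B_{1,i-1} ∘ ⋯ ∘ B_{1,j} ∘ a_j : W_j → V_i` (zero/junk when out of range). -/
def AtoV {V W : ℕ → Type*}
    [∀ i, AddCommGroup (V i)] [∀ i, Module ℂ (V i)]
    [∀ i, AddCommGroup (W i)] [∀ i, Module ℂ (W i)]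
    (B1 : ∀ i, V i →ₗ[ℂ] V (i + 1)) (a : ∀ i, W i →ₗ[ℂ] V i) :
    (i j : ℕ) → (W j →ₗ[ℂ] V i)
  | 0, _ => 0
  | i + 1, j =>
    if h : j = i + 1 then cast (by rw [h]) (a j)
    else (B1 i) ∘ₗ (AtoV B1 a i j)

/-- The map `α_i|_z : W_1 ⊕ ⋯ ⊕ W_i ⊕ V_i → V_i`, whose restriction to `W_j` (`j ≤ i`) is
`B_{1,i-1} ∘ ⋯ ∘ B_{1,j} ∘ a_j` and whose restriction to `V_i` is `z·id − B_{2,i}`. -/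
def alphaMap {V W : ℕ → Type*}
    [∀ i, AddCommGroup (V i)] [∀ i, Module ℂ (V i)]
    [∀ i, AddCommGroup (W i)] [∀ i, Module ℂ (W i)]
    (B1 : ∀ i, V i →ₗ[ℂ] V (i + 1)) (B2 : ∀ i, V i →ₗ[ℂ] V i)
    (a : ∀ i, W i →ₗ[ℂ] V i) (i : ℕ) (z : ℂ) :
    ((∀ j : Fin i, W (j.val + 1)) × V i) →ₗ[ℂ] V i :=
  LinearMap.coprod
    (∑ j : Fin i, (AtoV B1 a i (j.val + 1)) ∘ₗ (LinearMap.proj j))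
    (z • LinearMap.id - B2 i)

/-- The map `β_i : W_1 ⊕ ⋯ ⊕ W_i ⊕ V_i → W_1 ⊕ ⋯ ⊕ W_{i+1} ⊕ V_{i+1}`, the identity on each
`W_j` (`j ≤ i`) and `(b_i, B_{1,i})` on `V_i`. -/
def betaMap {V W : ℕ → Type*}
    [∀ i, AddCommGroup (V i)] [∀ i, Module ℂ (V i)]
    [∀ i, AddCommGroup (W i)] [∀ i, Module ℂ (W i)]
    (B1 : ∀ i, V i →ₗ[ℂ] V (i + 1)) (b : ∀ i, V i →ₗ[ℂ] W (i + 1)) (i : ℕ) :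
    ((∀ j : Fin i, W (j.val + 1)) × V i) →ₗ[ℂ]
      ((∀ j : Fin (i + 1), W (j.val + 1)) × V (i + 1)) :=
  LinearMap.prod
    (LinearMap.pi fun j' : Fin (i + 1) =>
      if h : j'.val < i then
        (LinearMap.proj (⟨j'.val, h⟩ : Fin i)) ∘ₗ (LinearMap.fst ℂ _ _)
      else
        cast (by
          have hj : j'.val = i := le_antisymm (Nat.lt_succ_iff.mp j'.isLt) (not_lt.mp h)
          rw [hj]) ((b i) ∘ₗ (LinearMap.snd ℂ (∀ j : Fin i, W (j.val + 1)) (V i))))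
    ((B1 i) ∘ₗ (LinearMap.snd ℂ _ _))

/-- The moment map equation μ = 0. -/
def MomentZero {V W : ℕ → Type*}
    [∀ i, AddCommGroup (V i)] [∀ i, Module ℂ (V i)]
    [∀ i, AddCommGroup (W i)] [∀ i, Module ℂ (W i)]
    (n : ℕ)
    (B1 : ∀ i, V i →ₗ[ℂ] V (i + 1)) (B2 : ∀ i, V i →ₗ[ℂ] V i)
    (a : ∀ i, W i →ₗ[ℂ] V i) (b : ∀ i, V i →ₗ[ℂ] W (i + 1)) : Prop :=
  ∀ i, 1 ≤ i → i ≤ n - 2 →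
    (B1 i) ∘ₗ (B2 i) - (B2 (i + 1)) ∘ₗ (B1 i) + (a (i + 1)) ∘ₗ (b i) = 0

/-- Stability of a handsaw quiver datum. -/
def IsStable {V W : ℕ → Type*}
    [∀ i, AddCommGroup (V i)] [∀ i, Module ℂ (V i)]
    [∀ i, AddCommGroup (W i)] [∀ i, Module ℂ (W i)]
    (n : ℕ)
    (B1 : ∀ i, V i →ₗ[ℂ] V (i + 1)) (B2 : ∀ i, V i →ₗ[ℂ] V i)
    (a : ∀ i, W i →ₗ[ℂ] V i) : Prop :=
  ∀ S : ∀ i, Submodule ℂ (V i),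
    (∀ i, 1 ≤ i → i ≤ n - 2 → (S i).map (B1 i) ≤ S (i + 1)) →
    (∀ i, 1 ≤ i → i ≤ n - 1 → (S i).map (B2 i) ≤ S i) →
    (∀ i, 1 ≤ i → i ≤ n - 1 → LinearMap.range (a i) ≤ S i) →
    ∀ i, 1 ≤ i → i ≤ n - 1 → S i = ⊤

/-- Costability of a handsaw quiver datum. -/
def IsCostable {V W : ℕ → Type*}
    [∀ i, AddCommGroup (V i)] [∀ i, Module ℂ (V i)]
    [∀ i, AddCommGroup (W i)] [∀ i, Module ℂ (W i)]
    (n : ℕ)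
    (B1 : ∀ i, V i →ₗ[ℂ] V (i + 1)) (B2 : ∀ i, V i →ₗ[ℂ] V i)
    (b : ∀ i, V i →ₗ[ℂ] W (i + 1)) : Prop :=
  ∀ S : ∀ i, Submodule ℂ (V i),
    (∀ i, 1 ≤ i → i ≤ n - 2 → (S i).map (B1 i) ≤ S (i + 1)) →
    (∀ i, 1 ≤ i → i ≤ n - 1 → (S i).map (B2 i) ≤ S i) →
    (∀ i, 1 ≤ i → i ≤ n - 1 → S i ≤ LinearMap.ker (b i)) →
    ∀ i, 1 ≤ i → i ≤ n - 1 → S i = ⊥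


section Aux
variable {V W : ℕ → Type*}
    [∀ i, AddCommGroup (V i)] [∀ i, Module ℂ (V i)]
    [∀ i, AddCommGroup (W i)] [∀ i, Module ℂ (W i)]
    (B1 : ∀ i, V i →ₗ[ℂ] V (i + 1)) (B2 : ∀ i, V i →ₗ[ℂ] V i)
    (a : ∀ i, W i →ₗ[ℂ] V i) (b : ∀ i, V i →ₗ[ℂ] W (i + 1))

lemma AtoV_self (i : ℕ) : AtoV B1 a (i+1) (i+1) = a (i+1) := by
  rw [AtoV, dif_pos rfl]
  exact cast_eq _ _

lemma AtoV_ne {i j : ℕ} (h : j ≠ i + 1) :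
    AtoV B1 a (i+1) j = (B1 i) ∘ₗ AtoV B1 a i j := by
  rw [AtoV, dif_neg h]

lemma alphaMap_apply (i : ℕ) (z : ℂ) (w : ∀ j : Fin i, W (j.val + 1)) (v : V i) :
    alphaMap B1 B2 a i z (w, v)
      = (∑ j : Fin i, AtoV B1 a i (j.val + 1) (w j)) + (z • v - B2 i v) := by
  simp [alphaMap, LinearMap.sum_apply]

lemma betaMap_fst_castSucc (i : ℕ) (w : ∀ j : Fin i, W (j.val + 1)) (v : V i)
    (j : Fin i) :
    (betaMap B1 b i (w, v)).1 j.castSucc = w j := by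
  simp only [betaMap, LinearMap.prod_apply, Function.prod, LinearMap.pi_apply]
  rw [dif_pos (by simp)]
  rfl

lemma betaMap_fst_last (i : ℕ) (w : ∀ j : Fin i, W (j.val + 1)) (v : V i) :
    (betaMap B1 b i (w, v)).1 (Fin.last i) = b i v := by
  simp only [betaMap, LinearMap.prod_apply, Function.prod, LinearMap.pi_apply]
  rw [dif_neg (by simp)]
  rw [cast_eq]
  rfl

lemma betaMap_snd (i : ℕ) (w : ∀ j : Fin i, W (j.val + 1)) (v : V i) :
    (betaMap B1 b i (w, v)).2 = B1 i v := rfl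

lemma key_eq (i : ℕ) (z : ℂ) (w : ∀ j : Fin i, W (j.val + 1)) (v : V i) :
    (alphaMap B1 B2 a (i + 1) z) (betaMap B1 b i (w, v))
      = B1 i (∑ j : Fin i, AtoV B1 a i (j.val + 1) (w j))
        + (z • B1 i v - B2 (i+1) (B1 i v) + a (i+1) (b i v)) := by
  rw [show betaMap B1 b i (w, v)
        = ((betaMap B1 b i (w, v)).1, (betaMap B1 b i (w, v)).2) from rfl,
      alphaMap_apply, betaMap_snd, Fin.sum_univ_castSucc]
  have h1 : ∀ j : Fin i,
      AtoV B1 a (i+1) ((j.castSucc).val + 1) ((betaMap B1 b i (w, v)).1 j.castSucc)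
        = B1 i (AtoV B1 a i (j.val + 1) (w j)) := by
    intro j
    rw [betaMap_fst_castSucc]
    show AtoV B1 a (i+1) (j.val + 1) (w j) = _
    rw [AtoV_ne B1 a (by omega : (j.val + 1 : ℕ) ≠ i + 1)]
    rfl
  simp_rw [h1]
  have h2 : AtoV B1 a (i+1) ((Fin.last i).val + 1) ((betaMap B1 b i (w, v)).1 (Fin.last i))
      = a (i+1) (b i v) := by
    rw [show AtoV B1 a (i+1) ((Fin.last i).val + 1) = AtoV B1 a (i+1) (i+1) from rfl,
      AtoV_self, betaMap_fst_last]
  rw [h2, ← map_sum]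
  abel

end Aux

theorem moment_map_iff_alpha_beta_compatible (n : ℕ) (hn : 2 ≤ n) (V W : ℕ → Type*)
    [∀ i, AddCommGroup (V i)] [∀ i, Module ℂ (V i)] [∀ i, FiniteDimensional ℂ (V i)]
    [∀ i, AddCommGroup (W i)] [∀ i, Module ℂ (W i)] [∀ i, FiniteDimensional ℂ (W i)]
    (B1 : ∀ i, V i →ₗ[ℂ] V (i + 1)) (B2 : ∀ i, V i →ₗ[ℂ] V i)
    (a : ∀ i, W i →ₗ[ℂ] V i) (b : ∀ i, V i →ₗ[ℂ] W (i + 1)) :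
    MomentZero n B1 B2 a b ↔
      ∀ i, 1 ≤ i → i ≤ n - 2 → ∀ z : ℂ,
        (B1 i) ∘ₗ (alphaMap B1 B2 a i z) =
          (alphaMap B1 B2 a (i + 1) z) ∘ₗ (betaMap B1 b i) := by
  constructor
  · intro hmu i h1 h2 z
    apply LinearMap.ext
    rintro ⟨w, v⟩
    rw [LinearMap.comp_apply, LinearMap.comp_apply, alphaMap_apply, key_eq,
      map_add, map_sub, map_smul]
    have hv := LinearMap.congr_fun (hmu i h1 h2) v
    simp only [LinearMap.add_apply, LinearMap.sub_apply, LinearMap.comp_apply,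
      LinearMap.zero_apply] at hv
    have e : a (i+1) (b i v) = -(B1 i (B2 i v) - B2 (i+1) (B1 i v)) :=
      eq_neg_of_add_eq_zero_right hv
    rw [e]
    abel
  · intro h i h1 h2
    have hz := h i h1 h2 0
    apply LinearMap.ext
    intro v
    have hv := LinearMap.congr_fun hz ((0 : ∀ j : Fin i, W (j.val + 1)), v)
    rw [LinearMap.comp_apply, LinearMap.comp_apply, alphaMap_apply, key_eq] at hv
    simp only [Pi.zero_apply, map_zero, Finset.sum_const_zero, zero_smul, zero_add, zero_sub,
      map_neg] at hv
    simp only [LinearMap.add_apply, LinearMap.sub_apply, LinearMap.comp_apply,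
      LinearMap.zero_apply]
    have hX : B1 i (B2 i v) = B2 (i+1) (B1 i v) - a (i+1) (b i v) := by
      rw [← neg_inj, hv]
      abel
    rw [hX]
    abel

end
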